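/- Let j be an integer with j > 1 and let p = 2j/(2j-1). Let G be a function in L^{2j} with Ĝ(n) real and Ĝ(n) ≥ 0 for all n ∈ ℤ, and set F = (conj G)^{j-1} G^j. If f is a function in L^p such that |f̂(n)| ≥ F̂(n) at every integer n where Ĝ(n) ≠ 0, then ‖f‖_p ≥ ‖F‖_p. -/

import Mathlib

open MeasureTheory Complex
open scoped Real ENNReal

noncomputable section

instance : Fact (0 < 2 * Real.pi) := ⟨by positivity⟩

abbrev Circle2Pi := AddCircle (2 * Real.pi)

abbrev circleMeasure : Measure Circle2Pi := AddCircle.haarAddCircle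

namespace DualAux

open scoped ComplexConjugate

local notation "⟪" x ", " y "⟫" => @inner ℂ _ _ x y

lemma fourierCoeff_congr_ae {u v : Circle2Pi → ℂ} (h : u =ᵐ[circleMeasure] v) (n : ℤ) :
    fourierCoeff u n = fourierCoeff v n :=
  integral_congr_ae (h.mono fun _ hx => by show _ • _ = _ • _; rw [hx])

lemma memLp_of_continuous {u : Circle2Pi → ℂ} (hu : Continuous u) (q : ℝ≥0∞) :
    MemLp u q circleMeasure := by
  obtain ⟨C, hC⟩ : ∃ C, ∀ θ : Circle2Pi, ‖u θ‖ ≤ C := by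
    obtain ⟨x, -, hx⟩ := isCompact_univ.exists_isMaxOn Set.univ_nonempty
      hu.norm.continuousOn
    exact ⟨‖u x‖, fun θ => hx (Set.mem_univ θ)⟩
  exact (memLp_top_of_bound hu.aestronglyMeasurable C
    (Filter.Eventually.of_forall hC)).mono_exponent le_top

lemma hasSum_parseval {u v : Circle2Pi → ℂ} (hu : MemLp u 2 circleMeasure)
    (hv : MemLp v 2 circleMeasure) :
    HasSum (fun k : ℤ => conj (fourierCoeff u k) * fourierCoeff v k)
      (∫ θ, conj (u θ) * v θ ∂circleMeasure) := by
  have key := HilbertBasis.hasSum_inner_mul_inner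
    (fourierBasis (T := 2 * Real.pi)) (hu.toLp u) (hv.toLp v)
  have hrepr : ∀ (w : Circle2Pi → ℂ) (hw : MemLp w 2 circleMeasure) (k : ℤ),
      ⟪(fourierBasis (T := 2 * Real.pi)) k, hw.toLp w⟫ = fourierCoeff w k := by
    intro w hw k
    rw [← fourierBasis.repr_apply_apply, fourierBasis_repr]
    exact fourierCoeff_congr_ae hw.coeFn_toLp k
  have hinner : ⟪hu.toLp u, hv.toLp v⟫ = ∫ θ, conj (u θ) * v θ ∂circleMeasure := by
    rw [MeasureTheory.L2.inner_def]
    refine integral_congr_ae ?_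
    filter_upwards [hu.coeFn_toLp, hv.coeFn_toLp] with θ h1 h2
    rw [h1, h2, RCLike.inner_apply']
  rw [hinner] at key
  have hfun : (fun k : ℤ => conj (fourierCoeff u k) * fourierCoeff v k) = fun k : ℤ =>
      ⟪hu.toLp u, (fourierBasis (T := 2 * Real.pi)) k⟫ * ⟪(fourierBasis (T := 2 * Real.pi)) k, hv.toLp v⟫ := by
    funext k
    rw [← inner_conj_symm, hrepr u hu k, hrepr v hv k]
  rw [hfun]
  exact key

lemma fourierCoeff_mul_fourier (u : Circle2Pi → ℂ) (m k : ℤ) :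
    fourierCoeff (fun θ => u θ * fourier m θ) k = fourierCoeff u (k - m) := by
  rw [fourierCoeff, fourierCoeff]
  congr 1
  funext θ
  have h : fourier (-k) θ * fourier m θ = fourier (-(k - m)) θ := by
    rw [← fourier_add]; congr 1; ring
  simp only [smul_eq_mul]
  calc fourier (-k) θ * (u θ * fourier m θ)
      = (fourier (-k) θ * fourier m θ) * u θ := by ring
    _ = fourier (-(k - m)) θ * u θ := by rw [h]

lemma fourierCoeff_conj (u : Circle2Pi → ℂ) (k : ℤ) :
    fourierCoeff (fun θ => conj (u θ)) k = conj (fourierCoeff u (-k)) := by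
  rw [fourierCoeff, fourierCoeff, ← integral_conj]
  congr 1
  funext θ
  simp only [smul_eq_mul, map_mul, neg_neg]
  rw [fourier_neg]

lemma norm_fourier_apply (m : ℤ) (θ : Circle2Pi) : ‖fourier m θ‖ = 1 := by
  rw [fourier_apply]
  exact Circle.norm_coe _

lemma memLp_two_mul_fourier {u : Circle2Pi → ℂ} (hu : MemLp u 2 circleMeasure) (m : ℤ) :
    MemLp (fun θ => u θ * fourier m θ) 2 circleMeasure := by
  refine hu.of_le (hu.1.mul (map_continuous (fourier m)).aestronglyMeasurable)
    (Filter.Eventually.of_forall fun θ => ?_)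
  rw [norm_mul, norm_fourier_apply, mul_one]

lemma memLp_two_conj {u : Circle2Pi → ℂ} (hu : MemLp u 2 circleMeasure) :
    MemLp (fun θ => conj (u θ)) 2 circleMeasure := by
  refine hu.of_le (Complex.continuous_conj.comp_aestronglyMeasurable hu.1)
    (Filter.Eventually.of_forall fun θ => ?_)
  rw [RCLike.norm_conj]

/-- Convolution theorem for products of two `L²` functions. -/
lemma hasSum_fourierCoeff_mul {u v : Circle2Pi → ℂ}
    (hu : MemLp u 2 circleMeasure) (hv : MemLp v 2 circleMeasure) (m : ℤ) :
    HasSum (fun k : ℤ => fourierCoeff u (m - k) * fourierCoeff v k)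
      (fourierCoeff (fun θ => u θ * v θ) m) := by
  have hw : MemLp (fun θ => conj (u θ) * fourier m θ) 2 circleMeasure :=
    memLp_two_mul_fourier (memLp_two_conj hu) m
  have key := hasSum_parseval hw hv
  have h1 : ∀ k : ℤ, conj (fourierCoeff (fun θ => conj (u θ) * fourier m θ) k)
      = fourierCoeff u (m - k) := by
    intro k
    rw [fourierCoeff_mul_fourier (fun θ => conj (u θ)) m k, fourierCoeff_conj, conj_conj]
    congr 1; ring
  have h2 : (∫ θ, conj (conj (u θ) * fourier m θ) * v θ ∂circleMeasure)
      = fourierCoeff (fun θ => u θ * v θ) m := by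
    rw [fourierCoeff]
    refine integral_congr_ae (Filter.Eventually.of_forall fun θ => ?_)
    show conj (conj (u θ) * fourier m θ) * v θ = fourier (-m) θ • (u θ * v θ)
    rw [smul_eq_mul, map_mul, conj_conj, fourier_neg]
    ring
  rw [h2] at key
  convert key using 2 with k
  rw [h1]

/-- Parseval: summability of squared coefficients. -/
lemma summable_sq_fourierCoeff {u : Circle2Pi → ℂ} (hu : MemLp u 2 circleMeasure) :
    Summable (fun k : ℤ => ‖fourierCoeff u k‖ ^ 2) := by
  have hm : Memℓp (⇑(fourierBasis.repr (hu.toLp u)) : ℤ → ℂ) 2 :=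
    (fourierBasis.repr (hu.toLp u)).property
  have hs := (memℓp_gen_iff (p := 2) (by norm_num)).1 hm
  have : ∀ k : ℤ, ‖(fourierBasis.repr (hu.toLp u)) k‖ ^ ((2:ℝ≥0∞).toReal)
      = ‖fourierCoeff u k‖ ^ 2 := by
    intro k
    rw [fourierBasis_repr, fourierCoeff_congr_ae hu.coeFn_toLp]
    norm_num
  exact (summable_congr this).1 hs

lemma tsum_sq_fourierCoeff' {u : Circle2Pi → ℂ} (hu : MemLp u 2 circleMeasure) :
    ∑' k : ℤ, ‖fourierCoeff u k‖ ^ 2 = ∫ θ, ‖u θ‖ ^ 2 ∂circleMeasure := by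
  have h := tsum_sq_fourierCoeff (hu.toLp u)
  have h1 : ∀ k : ℤ, ‖fourierCoeff (hu.toLp u : Circle2Pi → ℂ) k‖ ^ 2
      = ‖fourierCoeff u k‖ ^ 2 := fun k => by
    rw [fourierCoeff_congr_ae hu.coeFn_toLp]
  have h2 : (∫ θ, ‖(hu.toLp u : Circle2Pi → ℂ) θ‖ ^ 2 ∂circleMeasure)
      = ∫ θ, ‖u θ‖ ^ 2 ∂circleMeasure := by
    refine integral_congr_ae ?_
    filter_upwards [hu.coeFn_toLp] with θ hθ
    rw [hθ]
  rw [← h2, ← h]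
  exact tsum_congr fun k => (h1 k).symm

lemma fourierCoeff_fourier (n m : ℤ) :
    fourierCoeff (⇑(fourier n) : Circle2Pi → ℂ) m = if m = n then 1 else 0 := by
  have h := orthonormal_iff_ite.mp (orthonormal_fourier (T := 2 * Real.pi)) m n
  rw [ContinuousMap.inner_toLp] at h
  rw [← h, fourierCoeff]
  refine integral_congr_ae (Filter.Eventually.of_forall fun θ => ?_)
  show fourier (-m) θ • fourier n θ = fourier n θ * conj (fourier m θ)
  rw [smul_eq_mul, fourier_neg, mul_comm]

lemma aesm_pow {u : Circle2Pi → ℂ} (hu : AEStronglyMeasurable u circleMeasure) (k : ℕ) :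
    AEStronglyMeasurable (fun θ => (u θ)^k) circleMeasure := by
  induction k with
  | zero => simpa using aestronglyMeasurable_const
  | succ k ih => simp only [pow_succ]; exact ih.mul hu

lemma memLp_pow {u : Circle2Pi → ℂ} {j : ℕ} (hj : 1 ≤ j)
    (hu : MemLp u (2 * j : ℝ≥0∞) circleMeasure) {k : ℕ} (hk1 : 1 ≤ k) (hkj : k ≤ j) :
    MemLp (fun θ => (u θ)^k) 2 circleMeasure := by
  have hk0 : (k : ℝ≥0∞) ≠ 0 := Nat.cast_ne_zero.mpr (by omega)
  have hkt : (k : ℝ≥0∞) ≠ ∞ := ENNReal.natCast_ne_top k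
  have hq : MemLp (fun θ => (u θ)^k) ((2 * j : ℝ≥0∞) / k) circleMeasure := by
    constructor
    · exact aesm_pow hu.1 k
    · have hnorm : ∀ θ, ‖(u θ)^k‖ = ‖(‖u θ‖ ^ (k:ℝ))‖ := by
        intro θ
        rw [norm_pow, Real.norm_eq_abs, Real.rpow_natCast,
          _root_.abs_of_nonneg (pow_nonneg (norm_nonneg _) _)]
      have heq : eLpNorm (fun θ => (u θ)^k) ((2*(j:ℝ≥0∞))/k) circleMeasure
          = eLpNorm u (2*(j:ℝ≥0∞)) circleMeasure ^ (k:ℝ) := by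
        rw [eLpNorm_congr_norm_ae (Filter.Eventually.of_forall hnorm),
          eLpNorm_norm_rpow u (by positivity : (0:ℝ) < (k:ℝ))]
        congr 1
        rw [ENNReal.ofReal_natCast, ENNReal.div_mul_cancel hk0 hkt]
      rw [heq]
      exact ENNReal.rpow_lt_top_of_nonneg (by positivity) hu.2.ne
  refine hq.mono_exponent ?_
  rw [ENNReal.le_div_iff_mul_le (Or.inl hk0) (Or.inl hkt)]
  have : (k:ℝ≥0∞) ≤ (j:ℝ≥0∞) := by exact_mod_cast hkj
  calc (2:ℝ≥0∞) * k ≤ 2 * (j:ℝ≥0∞) := by gcongr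

end DualAux

section Main

open DualAux
open scoped ComplexConjugate

theorem dual_norm_inequality (j : ℕ) (hj : 1 < j)
    (p : ℝ≥0∞) (hp : p = (2 * j : ℝ≥0∞) / (2 * j - 1))
    (G : Circle2Pi → ℂ) (hG : MemLp G (2 * j : ℝ≥0∞) circleMeasure)
    (hGpos : ∀ n : ℤ, (fourierCoeff G n).im = 0 ∧ 0 ≤ (fourierCoeff G n).re)
    (F : Circle2Pi → ℂ)
    (hF : F = fun θ => (starRingEnd ℂ (G θ)) ^ (j - 1) * (G θ) ^ j)
    (f : Circle2Pi → ℂ) (hf : MemLp f p circleMeasure)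
    (hdom : ∀ n : ℤ, fourierCoeff G n ≠ 0 →
      (fourierCoeff F n).re ≤ ‖fourierCoeff f n‖) :
    eLpNorm F p circleMeasure ≤ eLpNorm f p circleMeasure := by
  classical
  have hj1 : 1 ≤ j := hj.le
  -- numerology
  set q₀ : ℝ := 2 * (j : ℝ) with hq₀def
  set p₀ : ℝ := q₀ / (q₀ - 1) with hp₀def
  have hq₀2 : (2:ℝ) ≤ q₀ := by
    have : (1:ℝ) ≤ (j:ℝ) := by exact_mod_cast hj1
    rw [hq₀def]; nlinarith
  have hq₀pos : (0:ℝ) < q₀ := by linarith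
  have hpq : p₀.HolderConjugate q₀ := by
    refine ((Real.holderConjugate_iff_eq_conjExponent (by linarith : (1:ℝ) < q₀)).mpr ?_).symm
    exact hp₀def
  -- ENNReal facts
  have h2jcast : (2 * (j:ℝ≥0∞)) = ((2*j : ℕ) : ℝ≥0∞) := by push_cast; ring
  have h2j0 : (2 * (j:ℝ≥0∞)) ≠ 0 := by
    rw [h2jcast]
    exact Nat.cast_ne_zero.mpr (by omega)
  have h2jt : (2 * (j:ℝ≥0∞)) ≠ ∞ := by
    rw [h2jcast]; exact ENNReal.natCast_ne_top _
  have h1lt : (1:ℝ≥0∞) < 2 * (j:ℝ≥0∞) := by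
    rw [h2jcast]
    exact_mod_cast (by omega : 1 < 2*j)
  have hden0 : (2 * (j:ℝ≥0∞) - 1) ≠ 0 := by
    intro h
    exact absurd (tsub_eq_zero_iff_le.mp h) (not_le.mpr h1lt)
  have hdent : (2 * (j:ℝ≥0∞) - 1) ≠ ∞ := ne_top_of_le_ne_top h2jt tsub_le_self
  have hp1 : 1 ≤ p := by
    rw [hp, ENNReal.le_div_iff_mul_le (Or.inl hden0) (Or.inl hdent), one_mul]
    exact tsub_le_self
  have hp0 : p ≠ 0 := by
    intro h; rw [h] at hp1; exact absurd hp1 (by simp)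
  have hpt : p ≠ ∞ := by
    rw [hp]
    exact (ENNReal.div_lt_top h2jt hden0).ne
  have hpR : p.toReal = p₀ := by
    rw [hp, ENNReal.toReal_div, ENNReal.toReal_sub_of_le h1lt.le h2jt]
    norm_num [hp₀def, hq₀def]
  -- the coefficient sequence of G
  set a : ℤ → ℝ := fun n => (fourierCoeff G n).re with hadef
  have haG : ∀ n : ℤ, fourierCoeff G n = ((a n : ℝ) : ℂ) := by
    intro n
    refine Complex.ext ?_ ?_
    · simp [hadef]
    · simp [hadef, (hGpos n).1]
  have ha0 : ∀ n : ℤ, 0 ≤ a n := fun n => (hGpos n).2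
  have hG2 : MemLp G 2 circleMeasure := by
    refine hG.mono_exponent ?_
    calc (2:ℝ≥0∞) = 2 * 1 := by norm_num
    _ ≤ 2 * (j:ℝ≥0∞) := by
        gcongr
        exact_mod_cast hj1
  have hGpow : ∀ k : ℕ, 1 ≤ k → k ≤ j → MemLp (fun θ => (G θ)^k) 2 circleMeasure :=
    fun k hk1 hkj => memLp_pow hj1 hG hk1 hkj
  set α : ℕ → ℤ → ℝ := fun k m => (fourierCoeff (fun θ => (G θ)^k) m).re with hαdef
  -- coefficients of powers of G are nonnegative reals
  have key : ∀ k : ℕ, 1 ≤ k → k ≤ j →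
      ∀ m : ℤ, fourierCoeff (fun θ => (G θ)^k) m = ((α k m : ℝ) : ℂ) ∧ 0 ≤ α k m := by
    intro k hk1
    induction k, hk1 using Nat.le_induction with
    | base =>
      intro _ m
      have h1 : (fun θ => (G θ)^1) = G := by funext θ; rw [pow_one]
      have hα1 : α 1 m = a m := by
        show (fourierCoeff (fun θ => (G θ)^1) m).re = _
        rw [h1]
      constructor
      · rw [h1, hα1]
        exact haG m
      · rw [hα1]
        exact ha0 m
    | succ k hk ih =>
      intro hkj m
      have hk_le : k ≤ j := by omega
      have hs := hasSum_fourierCoeff_mul (hGpow k hk hk_le) hG2 m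
      have hre : (fun θ => (G θ)^k * G θ) = (fun θ => (G θ)^(k+1)) := by
        funext θ; rw [pow_succ]
      rw [hre] at hs
      have hterm : (fun n : ℤ => fourierCoeff (fun θ => (G θ)^k) (m - n) * fourierCoeff G n)
          = fun n : ℤ => ((α k (m-n) * a n : ℝ) : ℂ) := by
        funext n
        rw [(ih hk_le (m-n)).1, haG n, ← Complex.ofReal_mul]
      rw [hterm] at hs
      have hri := (Complex.hasSum_iff _ _).1 hs
      have hRe : HasSum (fun n : ℤ => α k (m-n) * a n)
          ((fourierCoeff (fun θ => (G θ)^(k+1)) m).re) := by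
        simpa using hri.1
      have hIm : (fourierCoeff (fun θ => (G θ)^(k+1)) m).im = 0 := by
        have h0 : HasSum (fun _ : ℤ => (0:ℝ)) ((fourierCoeff (fun θ => (G θ)^(k+1)) m).im) := by
          simpa using hri.2
        exact (h0.unique hasSum_zero)
      have hnn : 0 ≤ α (k+1) m := by
        show 0 ≤ (fourierCoeff (fun θ => (G θ)^(k+1)) m).re
        rw [← hRe.tsum_eq]
        exact tsum_nonneg fun n => mul_nonneg (ih hk_le (m-n)).2 (ha0 n)
      constructor
      · refine Complex.ext ?_ ?_
        · simp [hαdef]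
        · simp [hαdef, hIm]
      · exact hnn
  -- convolution identity for the coefficient sequences
  have hconv : ∀ k : ℕ, 1 ≤ k → k + 1 ≤ j →
      ∀ m : ℤ, HasSum (fun n : ℤ => α k (m - n) * a n) (α (k+1) m) := by
    intro k hk1 hkj m
    have hs := hasSum_fourierCoeff_mul (hGpow k hk1 (by omega)) hG2 m
    have hre : (fun θ => (G θ)^k * G θ) = (fun θ => (G θ)^(k+1)) := by
      funext θ; rw [pow_succ]
    rw [hre] at hs
    have hterm : (fun n : ℤ => fourierCoeff (fun θ => (G θ)^k) (m - n) * fourierCoeff G n)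
        = fun n : ℤ => ((α k (m-n) * a n : ℝ) : ℂ) := by
      funext n
      rw [(key k hk1 (by omega) (m-n)).1, haG n, ← Complex.ofReal_mul]
    rw [hterm, (key (k+1) (by omega) hkj m).1] at hs
    exact_mod_cast hs
  -- Fourier coefficients of F
  have hFc : ∀ m : ℤ, HasSum (fun k : ℤ => α (j-1) (k - m) * α j k) ((fourierCoeff F m).re)
      ∧ (fourierCoeff F m).im = 0 := by
    intro m
    have hu : MemLp (fun θ => (G θ)^(j-1) * fourier m θ) 2 circleMeasure :=
      memLp_two_mul_fourier (hGpow (j-1) (by omega) (by omega)) m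
    have hv : MemLp (fun θ => (G θ)^j) 2 circleMeasure := hGpow j hj1 le_rfl
    have hs := hasSum_parseval hu hv
    have hterm : (fun k : ℤ => conj (fourierCoeff (fun θ => (G θ)^(j-1) * fourier m θ) k)
        * fourierCoeff (fun θ => (G θ)^j) k)
        = fun k : ℤ => ((α (j-1) (k-m) * α j k : ℝ) : ℂ) := by
      funext k
      have h1 : fourierCoeff (fun θ => (G θ)^(j-1) * fourier m θ) k
          = fourierCoeff (fun θ => (G θ)^(j-1)) (k - m) :=
        fourierCoeff_mul_fourier _ m k
      rw [h1, (key (j-1) (by omega) (by omega) (k-m)).1, (key j hj1 le_rfl k).1,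
        Complex.conj_ofReal, ← Complex.ofReal_mul]
    have hint : (∫ θ, conj ((G θ)^(j-1) * fourier m θ) * (G θ)^j ∂circleMeasure)
        = fourierCoeff F m := by
      rw [hF, fourierCoeff]
      refine integral_congr_ae (Filter.Eventually.of_forall fun θ => ?_)
      show conj ((G θ)^(j-1) * fourier m θ) * (G θ)^j
          = fourier (-m) θ • ((starRingEnd ℂ) (G θ) ^ (j - 1) * (G θ) ^ j)
      rw [smul_eq_mul, map_mul, map_pow, fourier_neg]
      ring
    rw [hterm, hint] at hs
    have hri := (Complex.hasSum_iff _ _).1 hs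
    constructor
    · simpa using hri.1
    · have h0 : HasSum (fun _ : ℤ => (0:ℝ)) ((fourierCoeff F m).im) := by simpa using hri.2
      exact h0.unique hasSum_zero
  have hFre0 : ∀ i : ℤ, 0 ≤ (fourierCoeff F i).re := by
    intro i
    rw [← (hFc i).1.tsum_eq]
    exact tsum_nonneg fun k =>
      mul_nonneg (key (j-1) (by omega) (by omega) (k-i)).2 (key j hj1 le_rfl k).2
  -- Parseval for G^j
  set M : ℝ := ∫ θ, ‖G θ‖ ^ q₀ ∂circleMeasure with hMdef
  have hM0 : 0 ≤ M := integral_nonneg fun θ => Real.rpow_nonneg (norm_nonneg _) _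
  have hGv : MemLp (fun θ => (G θ)^j) 2 circleMeasure := hGpow j hj1 le_rfl
  have hsqpt : ∀ (u : Circle2Pi → ℂ) (θ : Circle2Pi), ‖(u θ)^j‖^2 = ‖u θ‖ ^ q₀ := by
    intro u θ
    rw [norm_pow, ← pow_mul, show q₀ = ((j*2 : ℕ) : ℝ) by push_cast [hq₀def]; ring,
      Real.rpow_natCast]
  have hcoe : ∀ m : ℤ, ‖fourierCoeff (fun θ => (G θ)^j) m‖^2 = α j m ^ 2 := by
    intro m
    rw [(key j hj1 le_rfl m).1, Complex.norm_real, Real.norm_eq_abs]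
    exact sq_abs _
  have hMsum : Summable (fun m : ℤ => α j m ^ 2) :=
    (summable_congr hcoe).1 (summable_sq_fourierCoeff hGv)
  have hMeq : ∑' m : ℤ, α j m ^ 2 = M := by
    rw [← tsum_congr hcoe, tsum_sq_fourierCoeff' hGv, hMdef]
    exact integral_congr_ae (Filter.Eventually.of_forall fun θ => hsqpt G θ)
  -- the L^p norm of f
  set Nf : ℝ := (∫ θ, ‖f θ‖ ^ p₀ ∂circleMeasure) ^ (1/p₀) with hNfdef
  have hNf0 : 0 ≤ Nf :=
    Real.rpow_nonneg (integral_nonneg fun θ => Real.rpow_nonneg (norm_nonneg _) _) _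
  have hfnorm : eLpNorm f p circleMeasure = ENNReal.ofReal Nf := by
    rw [hf.eLpNorm_eq_integral_rpow_norm hp0 hpt, hNfdef, hpR, one_div]
  -- integrability of f
  have hfint : Integrable f circleMeasure := hf.integrable hp1
  have hpofReal : ENNReal.ofReal p₀ = p := by
    rw [← hpR, ENNReal.ofReal_toReal hpt]
  have hqofReal : ENNReal.ofReal q₀ = 2 * (j:ℝ≥0∞) := by
    rw [show q₀ = ((2*j : ℕ):ℝ) by push_cast [hq₀def]; ring, ENNReal.ofReal_natCast, h2jcast]
  -- the crucial finite-sum bound via a trigonometric polynomial and Hölder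
  have hbound : ∀ s : Finset ℤ,
      (∑ i ∈ s, (fourierCoeff F i).re * a i) ≤ Nf * M ^ (1/q₀) := by
    intro s
    set w : ℤ → ℂ := fun i => if fourierCoeff f i = 0 then 0
      else fourierCoeff f i / (‖fourierCoeff f i‖ : ℂ) with hwdef
    have hw1 : ∀ i, ‖w i‖ ≤ 1 := by
      intro i
      rw [hwdef]
      by_cases h : fourierCoeff f i = 0
      · simp [h]
      · have h0 : ‖fourierCoeff f i‖ ≠ 0 := norm_ne_zero_iff.mpr h
        simp only [if_neg h, norm_div, Complex.norm_real,
          norm_norm]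
        rw [div_self h0]
    have hwf : ∀ i, conj (w i) * fourierCoeff f i
        = ((‖fourierCoeff f i‖ : ℝ) : ℂ) := by
      intro i
      by_cases h : fourierCoeff f i = 0
      · simp [hwdef, h]
      · have hne : ((‖fourierCoeff f i‖ : ℝ) : ℂ) ≠ 0 := by
          simpa using norm_ne_zero_iff.mpr h
        rw [hwdef]
        simp only [if_neg h, map_div₀, Complex.conj_ofReal]
        rw [div_mul_eq_mul_div, mul_comm, Complex.mul_conj, div_eq_iff hne,
          Complex.normSq_eq_norm_sq]
        push_cast
        ring
    set P : Circle2Pi → ℂ := fun θ => ∑ i ∈ s, (w i * (a i : ℂ)) * fourier i θ with hPdef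
    have hPcont : Continuous P := by
      refine continuous_finset_sum s fun i _ => ?_
      exact continuous_const.mul (map_continuous (fourier (T := 2 * Real.pi) i))
    have hPLp : ∀ q : ℝ≥0∞, MemLp P q circleMeasure := fun q => memLp_of_continuous hPcont q
    have hPcoeff : ∀ m : ℤ, fourierCoeff P m = if m ∈ s then w m * (a m : ℂ) else 0 := by
      intro m
      have hsum : fourierCoeff P m
          = ∑ i ∈ s, (w i * (a i : ℂ)) * fourierCoeff (⇑(fourier (T := 2 * Real.pi) i)) m := by
        rw [fourierCoeff]
        have : (fun θ : Circle2Pi => fourier (-m) θ • P θ)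
            = fun θ : Circle2Pi => ∑ i ∈ s, (w i * (a i : ℂ)) * (fourier (-m) θ • fourier i θ) := by
          funext θ
          rw [hPdef]
          simp only [smul_eq_mul, Finset.mul_sum]
          refine Finset.sum_congr rfl fun i _ => by ring
        rw [this, integral_finset_sum]
        · refine Finset.sum_congr rfl fun i _ => ?_
          rw [integral_const_mul, fourierCoeff]
        · intro i _
          refine (memLp_of_continuous ?_ 1).integrable le_rfl
          exact continuous_const.mul ((map_continuous (fourier (-m))).smul (map_continuous (fourier i)))
      rw [hsum]
      have : ∀ i ∈ s, (w i * (a i : ℂ)) * fourierCoeff (⇑(fourier (T := 2 * Real.pi) i)) m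
          = if m = i then w i * (a i : ℂ) else 0 := by
        intro i _
        rw [fourierCoeff_fourier i m]
        split_ifs <;> simp
      rw [Finset.sum_congr rfl this, Finset.sum_ite_eq s m (fun i => w i * (a i : ℂ))]
    have hPabs : ∀ n : ℤ, ‖fourierCoeff P n‖ ≤ a n := by
      intro n
      rw [hPcoeff n]
      by_cases h : n ∈ s
      · rw [if_pos h, norm_mul, Complex.norm_real, Real.norm_eq_abs, _root_.abs_of_nonneg (ha0 n)]
        calc ‖w n‖ * a n ≤ 1 * a n :=
              mul_le_mul_of_nonneg_right (hw1 n) (ha0 n)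
        _ = a n := one_mul _
      · rw [if_neg h]
        simpa using ha0 n
    -- majorant induction
    have hmaj : ∀ k : ℕ, 1 ≤ k → k ≤ j →
        ∀ m : ℤ, ‖fourierCoeff (fun θ => (P θ)^k) m‖ ≤ α k m := by
      intro k hk1
      induction k, hk1 using Nat.le_induction with
      | base =>
        intro _ m
        have h1 : (fun θ => (P θ)^1) = P := by funext θ; rw [pow_one]
        have hα1 : α 1 m = a m := by
          show (fourierCoeff (fun θ => (G θ)^1) m).re = _
          rw [show (fun θ => (G θ)^1) = G by funext θ; rw [pow_one]]
        rw [h1, hα1]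
        exact hPabs m
      | succ k hk ih =>
        intro hkj m
        have hk_le : k ≤ j := by omega
        have hs2 := hasSum_fourierCoeff_mul (u := fun θ => (P θ)^k)
          (memLp_of_continuous (hPcont.pow k) 2) (hPLp 2) m
        have hre : (fun θ => (P θ)^k * P θ) = (fun θ => (P θ)^(k+1)) := by
          funext θ; rw [pow_succ]
        rw [hre] at hs2
        have hfin : fourierCoeff (fun θ => (P θ)^(k+1)) m
            = ∑ n ∈ s, fourierCoeff (fun θ => (P θ)^k) (m - n) * fourierCoeff P n := by
          refine hs2.unique (hasSum_sum_of_ne_finset_zero ?_)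
          intro n hn
          rw [hPcoeff n, if_neg hn, mul_zero]
        rw [hfin]
        calc ‖∑ n ∈ s, fourierCoeff (fun θ => (P θ)^k) (m - n) * fourierCoeff P n‖
            ≤ ∑ n ∈ s, ‖fourierCoeff (fun θ => (P θ)^k) (m - n) * fourierCoeff P n‖ :=
              norm_sum_le _ _
          _ ≤ ∑ n ∈ s, α k (m-n) * a n := by
              refine Finset.sum_le_sum fun n _ => ?_
              rw [norm_mul]
              exact mul_le_mul (ih hk_le (m-n)) (hPabs n) (norm_nonneg _)
                (key k hk hk_le (m-n)).2
          _ ≤ α (k+1) m := sum_le_hasSum s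
              (fun n _ => mul_nonneg (key k hk hk_le (m-n)).2 (ha0 n))
              (hconv k hk (by omega) m)
    -- the polynomial is dominated in L^{2j}
    have hPj2 : MemLp (fun θ => (P θ)^j) 2 circleMeasure :=
      memLp_of_continuous (hPcont.pow j) 2
    have hPint : (∫ θ, ‖P θ‖ ^ q₀ ∂circleMeasure) ≤ M := by
      have hco : ∀ m : ℤ, ‖fourierCoeff (fun θ => (P θ)^j) m‖^2 ≤ α j m ^ 2 := by
        intro m
        have h1 := hmaj j hj1 le_rfl m
        have h2 : (0:ℝ) ≤ ‖fourierCoeff (fun θ => (P θ)^j) m‖ :=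
          norm_nonneg _
        nlinarith
      have hle : (∫ θ, ‖(P θ)^j‖^2 ∂circleMeasure) ≤ ∑' m : ℤ, α j m ^ 2 := by
        rw [← tsum_sq_fourierCoeff' hPj2]
        exact Summable.tsum_le_tsum hco (summable_sq_fourierCoeff hPj2) hMsum
      rw [hMeq] at hle
      calc (∫ θ, ‖P θ‖ ^ q₀ ∂circleMeasure) = ∫ θ, ‖(P θ)^j‖^2 ∂circleMeasure :=
            integral_congr_ae (Filter.Eventually.of_forall fun θ => (hsqpt P θ).symm)
      _ ≤ M := hle
    -- the pairing of f with the polynomial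
    have hz : (∫ θ, f θ * conj (P θ) ∂circleMeasure)
        = ((∑ i ∈ s, ‖fourierCoeff f i‖ * a i : ℝ) : ℂ) := by
      have hsplit : (fun θ => f θ * conj (P θ))
          = fun θ => ∑ i ∈ s, conj (w i * (a i : ℂ)) * (fourier (-i) θ * f θ) := by
        funext θ
        rw [hPdef]
        simp only [map_sum, map_mul, Finset.mul_sum]
        refine Finset.sum_congr rfl fun i _ => ?_
        rw [fourier_neg]
        ring
      rw [hsplit, integral_finset_sum]
      · have hterm : ∀ i ∈ s, (∫ θ, conj (w i * (a i : ℂ)) * (fourier (-i) θ * f θ) ∂circleMeasure)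
            = ((‖fourierCoeff f i‖ * a i : ℝ) : ℂ) := by
          intro i _
          rw [integral_const_mul]
          have : (∫ θ, fourier (-i) θ * f θ ∂circleMeasure) = fourierCoeff f i := by
            rw [fourierCoeff]
            refine integral_congr_ae (Filter.Eventually.of_forall fun θ => ?_)
            simp only [smul_eq_mul]
          rw [this, map_mul, Complex.conj_ofReal]
          calc conj (w i) * (a i : ℂ) * fourierCoeff f i
              = (conj (w i) * fourierCoeff f i) * (a i : ℂ) := by ring
          _ = ((‖fourierCoeff f i‖ * a i : ℝ) : ℂ) := by
              rw [hwf i, ← Complex.ofReal_mul]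
        rw [Finset.sum_congr rfl hterm, ← Complex.ofReal_sum]
      · intro i _
        refine Integrable.const_mul ?_ _
        refine Integrable.bdd_mul (c := 1) hfint
          (map_continuous (fourier (-i))).aestronglyMeasurable (Filter.Eventually.of_forall fun θ => ?_)
        rw [norm_fourier_apply]
    -- Hölder
    have hfp₀ : MemLp f (ENNReal.ofReal p₀) circleMeasure := by rw [hpofReal]; exact hf
    have hPq₀ : MemLp P (ENNReal.ofReal q₀) circleMeasure := hPLp _
    calc ∑ i ∈ s, (fourierCoeff F i).re * a i
        ≤ ∑ i ∈ s, ‖fourierCoeff f i‖ * a i := by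
          refine Finset.sum_le_sum fun i _ => ?_
          rcases eq_or_lt_of_le (ha0 i) with h0 | hpos
          · rw [← h0, mul_zero, mul_zero]
          · refine mul_le_mul_of_nonneg_right (hdom i ?_) (ha0 i)
            rw [haG i]
            simpa using ne_of_gt hpos
      _ = ‖∫ θ, f θ * conj (P θ) ∂circleMeasure‖ := by
          rw [hz, Complex.norm_real, Real.norm_eq_abs, _root_.abs_of_nonneg]
          exact Finset.sum_nonneg fun i _ =>
            mul_nonneg (norm_nonneg _) (ha0 i)
      _ ≤ ∫ θ, ‖f θ * conj (P θ)‖ ∂circleMeasure := by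
            exact norm_integral_le_integral_norm _
      _ = ∫ θ, ‖f θ‖ * ‖P θ‖ ∂circleMeasure := by
          refine integral_congr_ae (Filter.Eventually.of_forall fun θ => ?_)
          simp only [norm_mul, RCLike.norm_conj]
      _ ≤ (∫ θ, ‖f θ‖ ^ p₀ ∂circleMeasure) ^ (1/p₀) * (∫ θ, ‖P θ‖ ^ q₀ ∂circleMeasure) ^ (1/q₀) :=
          MeasureTheory.integral_mul_norm_le_Lp_mul_Lq hpq hfp₀ hPq₀
      _ ≤ Nf * M ^ (1/q₀) := by
          rw [hNfdef]
          refine mul_le_mul_of_nonneg_left ?_ hNf0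
          exact Real.rpow_le_rpow
            (integral_nonneg fun θ => Real.rpow_nonneg (norm_nonneg _) _) hPint
            (by positivity)
  -- Fubini chain in ℝ≥0∞
  have hjm1 : j - 1 + 1 = j := by omega
  have hinner1 : ∀ k : ℤ, HasSum (fun i : ℤ => α (j-1) (k - i) * a i) (α j k) := by
    intro k
    have h := hconv (j-1) (by omega) (by omega) k
    rwa [hjm1] at h
  have hα0 : ∀ (k : ℕ), 1 ≤ k → k ≤ j → ∀ m, 0 ≤ α k m := fun k h1 h2 m => (key k h1 h2 m).2
  set e : ℤ → ℤ → ℝ≥0∞ :=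
    fun k i => ENNReal.ofReal (α j k * (α (j-1) (k - i) * a i)) with hedef
  have h1 : ∑' (k : ℤ) (i : ℤ), e k i = ENNReal.ofReal M := by
    have hin : ∀ k : ℤ, (∑' i : ℤ, e k i) = ENNReal.ofReal (α j k * α j k) := by
      intro k
      have hsum : HasSum (fun i : ℤ => α j k * (α (j-1) (k-i) * a i)) (α j k * α j k) :=
        (hinner1 k).mul_left _
      rw [← hsum.tsum_eq, ENNReal.ofReal_tsum_of_nonneg
        (fun i => mul_nonneg (hα0 j hj1 le_rfl k)
          (mul_nonneg (hα0 (j-1) (by omega) (by omega) (k-i)) (ha0 i))) hsum.summable]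
    rw [tsum_congr hin]
    have hsum2 : Summable (fun k : ℤ => α j k * α j k) := by
      refine hMsum.congr fun k => ?_
      rw [pow_two]
    have hts : (∑' k : ℤ, α j k * α j k) = M := by
      rw [← hMeq]
      exact tsum_congr fun k => (pow_two _).symm
    rw [← ENNReal.ofReal_tsum_of_nonneg (fun k => mul_self_nonneg _) hsum2, hts]
  have h2 : ∑' (k : ℤ) (i : ℤ), e k i
      = ∑' i : ℤ, ENNReal.ofReal ((fourierCoeff F i).re * a i) := by
    rw [ENNReal.tsum_comm]
    refine tsum_congr fun i => ?_
    have hsum : HasSum (fun k : ℤ => α j k * (α (j-1) (k - i) * a i))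
        ((fourierCoeff F i).re * a i) := by
      have h := ((hFc i).1).mul_right (a i)
      have heq : (fun k : ℤ => α (j-1) (k - i) * α j k * a i)
          = fun k : ℤ => α j k * (α (j-1) (k - i) * a i) := by
        funext k; ring
      rwa [heq] at h
    rw [← hsum.tsum_eq, ENNReal.ofReal_tsum_of_nonneg
      (fun k => mul_nonneg (hα0 j hj1 le_rfl k)
        (mul_nonneg (hα0 (j-1) (by omega) (by omega) (k-i)) (ha0 i))) hsum.summable]
  have h3 : (∑' i : ℤ, ENNReal.ofReal ((fourierCoeff F i).re * a i))
      ≤ ENNReal.ofReal (Nf * M ^ (1/q₀)) := by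
    rw [ENNReal.tsum_eq_iSup_sum]
    refine iSup_le fun s => ?_
    rw [← ENNReal.ofReal_sum_of_nonneg
      (fun i _ => mul_nonneg (hFre0 i) (ha0 i))]
    exact ENNReal.ofReal_le_ofReal (hbound s)
  have hMle : M ≤ Nf * M ^ (1/q₀) := by
    have hchain : ENNReal.ofReal M ≤ ENNReal.ofReal (Nf * M ^ (1/q₀)) := by
      rw [← h1, h2]
      exact h3
    rwa [ENNReal.ofReal_le_ofReal_iff
      (mul_nonneg hNf0 (Real.rpow_nonneg hM0 _))] at hchain
  -- computation of the norm of F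
  have h2jm1pos : (0:ℝ) < ((2*j-1 : ℕ):ℝ) := by
    have : 1 ≤ 2*j - 1 := by omega
    exact_mod_cast Nat.lt_of_lt_of_le Nat.zero_lt_one this
  have hnormF : ∀ θ : Circle2Pi, ‖F θ‖ = ‖(‖G θ‖ ^ (((2*j-1 : ℕ)):ℝ))‖ := by
    intro θ
    rw [hF]
    simp only [norm_mul, norm_pow, RCLike.norm_conj]
    rw [Real.norm_eq_abs, Real.rpow_natCast,
      _root_.abs_of_nonneg (pow_nonneg (norm_nonneg _) _), ← pow_add]
    congr 1
    omega
  have hFe : eLpNorm F p circleMeasure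
      = eLpNorm G (2 * (j:ℝ≥0∞)) circleMeasure ^ (((2*j-1 : ℕ)):ℝ) := by
    rw [eLpNorm_congr_norm_ae (Filter.Eventually.of_forall hnormF),
      eLpNorm_norm_rpow G h2jm1pos]
    congr 1
    rw [ENNReal.ofReal_natCast, hp]
    have hcast : ((2*j-1 : ℕ) : ℝ≥0∞) = 2*(j:ℝ≥0∞) - 1 := by
      rw [ENNReal.natCast_sub]
      push_cast
      ring
    rw [hcast, ENNReal.div_mul_cancel hden0 hdent]
  have hGe : eLpNorm G (2 * (j:ℝ≥0∞)) circleMeasure = ENNReal.ofReal (M ^ (1/q₀)) := by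
    rw [hG.eLpNorm_eq_integral_rpow_norm h2j0 h2jt]
    have ht : (2*(j:ℝ≥0∞)).toReal = q₀ := by
      rw [hq₀def]
      simp
    rw [ht, one_div, hMdef]
  -- conclusion
  rw [hFe, hGe, hfnorm,
    ENNReal.ofReal_rpow_of_nonneg (Real.rpow_nonneg hM0 _) h2jm1pos.le]
  refine ENNReal.ofReal_le_ofReal ?_
  set t : ℝ := M ^ (1/q₀) with htdef
  have ht0 : 0 ≤ t := Real.rpow_nonneg hM0 _
  rcases eq_or_lt_of_le ht0 with h0 | hpos
  · rw [← h0, Real.zero_rpow (ne_of_gt h2jm1pos)]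
    exact hNf0
  · have htq : t ^ q₀ = M := by
      rw [htdef, ← Real.rpow_mul hM0, one_div_mul_cancel (ne_of_gt hq₀pos), Real.rpow_one]
    have hkey : t ^ q₀ ≤ Nf * t := by
      rw [htq]
      exact hMle
    have hsplit : t ^ q₀ = t ^ (((2*j-1 : ℕ)):ℝ) * t := by
      have hq1 : q₀ = (((2*j-1 : ℕ)):ℝ) + 1 := by
        rw [hq₀def, Nat.cast_sub (show 1 ≤ 2*j by omega)]
        push_cast
        ring
      rw [hq1, Real.rpow_add hpos, Real.rpow_one]
    rw [hsplit] at hkey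
    exact le_of_mul_le_mul_right hkey hpos




end Main
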